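/- For every positive integer N and every character χ : Γ → ℂ^×, the space Θ_N(χ) is an N-dimensional complex vector space. -/

import Mathlib

open Complex

/-- The lattice `Γ = ℤ + τℤ` as an additive subgroup of `ℂ`. -/
noncomputable def latticeGamma (τ : ℂ) : AddSubgroup ℂ := AddSubgroup.closure {1, τ}

theorem one_mem_latticeGamma (τ : ℂ) : (1 : ℂ) ∈ latticeGamma τ :=
  AddSubgroup.subset_closure (Set.mem_insert _ _)

theorem tau_mem_latticeGamma (τ : ℂ) : τ ∈ latticeGamma τ :=
  AddSubgroup.subset_closure (Set.mem_insert_of_mem _ rfl)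

/-- The space `Θ_N(χ)` of elliptic polynomials: entire functions `φ` with
`φ(y+1) = c₁ φ(y)` and `φ(y+τ) = c_τ e^{-2πiNy - πiNτ} φ(y)`, where `c₁ = χ(1)` and
`c_τ = χ(τ)`.  It is a complex subspace of the space of functions `ℂ → ℂ`. -/
noncomputable def ThetaSpace (τ : ℂ) (N : ℕ) (c1 cτ : ℂ) : Submodule ℂ (ℂ → ℂ) where
  carrier := {φ | Differentiable ℂ φ ∧ (∀ y : ℂ, φ (y + 1) = c1 * φ y) ∧
    (∀ y : ℂ, φ (y + τ) = cτ *
      Complex.exp (-2 * Real.pi * Complex.I * (N : ℂ) * y - Real.pi * Complex.I * (N : ℂ) * τ) *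
      φ y)}
  add_mem' := by
    rintro f g ⟨hf, hf1, hfτ⟩ ⟨hg, hg1, hgτ⟩
    refine ⟨hf.add hg, fun y => ?_, fun y => ?_⟩
    · simp only [Pi.add_apply, hf1 y, hg1 y]; ring
    · simp only [Pi.add_apply, hfτ y, hgτ y]; ring
  zero_mem' := by
    refine ⟨differentiable_const 0, fun y => ?_, fun y => ?_⟩ <;> simp
  smul_mem' := by
    rintro c f ⟨hf, hf1, hfτ⟩
    refine ⟨hf.const_smul c, fun y => ?_, fun y => ?_⟩
    · simp only [Pi.smul_apply, smul_eq_mul, hf1 y]; ring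
    · simp only [Pi.smul_apply, smul_eq_mul, hfτ y]; ring


open Complex MeasureTheory intervalIntegral

noncomputable section

/-- Orthogonality: `∫_0^1 e^{2πikt} dt = δ_{k,0}`. -/
lemma integral_exp_two_pi_int (k : ℤ) :
    (∫ t in (0:ℝ)..1, Complex.exp (2 * Real.pi * I * k * t)) =
      if k = 0 then 1 else 0 := by
  rcases eq_or_ne k 0 with rfl | hk
  · simp
  · have hc : (2 * (Real.pi:ℂ) * I * k) ≠ 0 := by
      simp [Real.pi_ne_zero, I_ne_zero, hk]
    rw [if_neg hk]
    rw [show (fun t : ℝ => Complex.exp (2 * (Real.pi:ℂ) * I * (k:ℂ) * (t:ℂ))) =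
      (fun t : ℝ => Complex.exp ((2 * (Real.pi:ℂ) * I * k) * t)) from rfl]
    rw [integral_exp_mul_complex hc]
    have h1 : Complex.exp (2 * (Real.pi:ℂ) * I * k * ((1:ℝ):ℂ)) = 1 := by
      push_cast
      rw [mul_one, show (2 * (Real.pi:ℂ) * I * k) = k * (2 * Real.pi * I) by ring,
        Complex.exp_int_mul_two_pi_mul_I]
    have h0 : Complex.exp (2 * (Real.pi:ℂ) * I * k * ((0:ℝ):ℂ)) = 1 := by
      norm_num
    rw [h1, h0, sub_self, zero_div]

/-- Contour-shift: for an entire 1-periodic function, `∫_0^1 g(t+s) dt` is independent of `s`. -/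
lemma integral_shift_of_periodic {g : ℂ → ℂ} (hg : Differentiable ℂ g)
    (hper : ∀ y, g (y + 1) = g y) (s : ℂ) :
    (∫ t in (0:ℝ)..1, g (t + s)) = ∫ t in (0:ℝ)..1, g t := by
  have rect := Complex.integral_boundary_rect_eq_zero_of_continuousOn_of_differentiableOn
    g 0 (1 + s.im * I) (hg.continuous.continuousOn) (hg.differentiableOn)
  have hre1 : (1 + (s.im:ℂ) * I).re = 1 := by simp
  have him1 : (1 + (s.im:ℂ) * I).im = s.im := by simp
  rw [hre1, him1] at rect
  simp only [Complex.zero_re, Complex.zero_im] at rect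
  have hv : (∫ y in (0:ℝ)..s.im, g (((1:ℝ):ℂ) + y * I)) =
      ∫ y in (0:ℝ)..s.im, g (((0:ℝ):ℂ) + y * I) := by
    apply intervalIntegral.integral_congr
    intro y _
    show g (((1:ℝ):ℂ) + (y:ℂ) * I) = g (((0:ℝ):ℂ) + (y:ℂ) * I)
    rw [show ((1:ℝ):ℂ) + (y:ℂ) * I = ((y:ℂ) * I) + 1 by push_cast; ring, hper]
    push_cast; ring_nf
  rw [hv] at rect
  have key : (∫ x in (0:ℝ)..1, g x) = ∫ x in (0:ℝ)..1, g (x + s.im * I) := by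
    have h2 : (∫ x in (0:ℝ)..1, g ((x:ℂ) + ((0:ℝ):ℂ) * I)) = ∫ x in (0:ℝ)..1, g x := by
      apply intervalIntegral.integral_congr
      intro x _
      norm_num
    rw [h2] at rect
    linear_combination rect
  have hper' : Function.Periodic (fun u : ℝ => g (u + s.im * I)) 1 := by
    intro u
    show g (((u+1 : ℝ):ℂ) + s.im * I) = g ((u:ℂ) + s.im * I)
    rw [show (((u+1:ℝ)):ℂ) + (s.im:ℂ) * I = ((u:ℂ) + s.im * I) + 1 by push_cast; ring, hper]
  have hsub : (∫ t in (0:ℝ)..1, g (t + s)) = ∫ t in (0:ℝ)..1,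
      (fun u : ℝ => g (u + s.im * I)) (t + s.re) := by
    apply intervalIntegral.integral_congr
    intro t _
    simp only
    rw [show ((t + s.re : ℝ) : ℂ) + (s.im:ℂ) * I = (t:ℂ) + s by
      push_cast; rw [add_assoc, Complex.re_add_im]]
  rw [hsub, intervalIntegral.integral_comp_add_right (fun u : ℝ => g (u + s.im * I)) s.re]
  rw [zero_add, show (1:ℝ) + s.re = s.re + 1 from add_comm 1 s.re]
  have h3 := hper'.intervalIntegral_add_eq s.re 0
  rw [zero_add] at h3
  rw [h3]
  exact key.symm

end

noncomputable section

lemma exp_helper {p q r : ℂ} (h : p + q = r) :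
    Complex.exp p * Complex.exp q = Complex.exp r := by
  rw [← Complex.exp_add, h]

/-- Twisted Fourier coefficient of `φ` along `[0,1]`. -/
def coefA (a : ℂ) (φ : ℂ → ℂ) (n : ℤ) : ℂ :=
  ∫ t in (0:ℝ)..1, Complex.exp (-(2 * Real.pi * I * n * t) - a * t) * φ t

lemma coef_rec (τ : ℂ) (N : ℕ) (c1 cτ a : ℂ) (ha : Complex.exp a = c1)
    {φ : ℂ → ℂ} (hd : Differentiable ℂ φ)
    (h1 : ∀ y, φ (y + 1) = c1 * φ y)
    (h2 : ∀ y : ℂ, φ (y + τ) = cτ *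
      Complex.exp (-2 * Real.pi * I * (N : ℂ) * y - Real.pi * I * (N : ℂ) * τ) * φ y)
    (n : ℤ) :
    coefA a φ n = (cτ * Complex.exp (-(a * τ) - Real.pi * I * N * τ - 2 * Real.pi * I * n * τ)) *
      coefA a φ (n + N) := by
  set g : ℂ → ℂ := fun y => Complex.exp (-(2 * Real.pi * I * n * y) - a * y) * φ y with hgdef
  have hgd : Differentiable ℂ g := by
    apply Differentiable.mul _ hd
    apply Differentiable.cexp
    fun_prop
  have gper : ∀ y, g (y + 1) = g y := by
    intro y
    show Complex.exp (-(2 * Real.pi * I * n * (y+1)) - a * (y+1)) * φ (y+1)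
      = Complex.exp (-(2 * Real.pi * I * n * y) - a * y) * φ y
    rw [h1 y, ← ha]
    have e1 : Complex.exp (-(2 * Real.pi * I * n * (y+1)) - a * (y+1)) * Complex.exp a
        = Complex.exp (-(2 * Real.pi * I * n * y) - a * y) := by
      rw [← Complex.exp_add, show (-(2 * (Real.pi:ℂ) * I * n * (y+1)) - a * (y+1)) + a
          = (-(2 * Real.pi * I * n * y) - a * y) + (-n : ℤ) * (2 * Real.pi * I) by
          push_cast; ring,
        Complex.exp_add, Complex.exp_int_mul_two_pi_mul_I, mul_one]
    linear_combination (φ y) * e1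
  have step1 : coefA a φ n = ∫ t in (0:ℝ)..1, g (t + τ) :=
    (integral_shift_of_periodic hgd gper τ).symm
  have step2 : (∫ t in (0:ℝ)..1, g (t + τ)) = ∫ t in (0:ℝ)..1,
      (cτ * Complex.exp (-(a * τ) - Real.pi * I * N * τ - 2 * Real.pi * I * n * τ)) *
        (Complex.exp (-(2 * Real.pi * I * (n + N : ℤ) * t) - a * t) * φ t) := by
    apply intervalIntegral.integral_congr
    intro t _
    show Complex.exp (-(2 * Real.pi * I * n * ((t:ℂ) + τ)) - a * ((t:ℂ) + τ)) * φ ((t:ℂ) + τ) = _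
    rw [h2 (t:ℂ)]
    have e : Complex.exp (-(2 * Real.pi * I * n * ((t:ℂ) + τ)) - a * ((t:ℂ) + τ)) *
        Complex.exp (-2 * Real.pi * I * (N : ℂ) * (t:ℂ) - Real.pi * I * (N : ℂ) * τ)
        = Complex.exp ((-(a * τ) - Real.pi * I * N * τ - 2 * Real.pi * I * n * τ) +
            (-(2 * Real.pi * I * (n + N : ℤ) * (t:ℂ)) - a * (t:ℂ))) :=
      exp_helper (by push_cast; ring)
    have e' : Complex.exp (-(a * τ) - Real.pi * I * N * τ - 2 * Real.pi * I * n * τ) *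
        Complex.exp (-(2 * Real.pi * I * (n + N : ℤ) * (t:ℂ)) - a * (t:ℂ))
        = Complex.exp ((-(a * τ) - Real.pi * I * N * τ - 2 * Real.pi * I * n * τ) +
            (-(2 * Real.pi * I * (n + N : ℤ) * (t:ℂ)) - a * (t:ℂ))) :=
      exp_helper rfl
    linear_combination cτ * φ (t:ℂ) * e - cτ * φ (t:ℂ) * e'
  rw [step1, step2, intervalIntegral.integral_const_mul]
  rfl

lemma coef_all_zero (τ : ℂ) (N : ℕ) (hN : 0 < N) (c1 cτ a : ℂ) (hcτ : cτ ≠ 0)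
    (ha : Complex.exp a = c1)
    {φ : ℂ → ℂ} (hd : Differentiable ℂ φ)
    (h1 : ∀ y, φ (y + 1) = c1 * φ y)
    (h2 : ∀ y : ℂ, φ (y + τ) = cτ *
      Complex.exp (-2 * Real.pi * I * (N : ℂ) * y - Real.pi * I * (N : ℂ) * τ) * φ y)
    (h0 : ∀ j : ℤ, 0 ≤ j → j < N → coefA a φ j = 0) (n : ℤ) :
    coefA a φ n = 0 := by
  have hC : ∀ m : ℤ, cτ * Complex.exp (-(a * τ) - Real.pi * I * N * τ
      - 2 * Real.pi * I * m * τ) ≠ 0 := fun m => mul_ne_zero hcτ (Complex.exp_ne_zero _)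
  have key : ∀ m : ℤ, ∀ j : ℤ, 0 ≤ j → j < N → coefA a φ (j + N * m) = 0 := by
    intro m
    induction m using Int.induction_on with
    | zero => intro j hj0 hjN; simpa using h0 j hj0 hjN
    | succ k ih =>
      intro j hj0 hjN
      have hrec := coef_rec τ N c1 cτ a ha hd h1 h2 (j + N * k)
      have hz := ih j hj0 hjN
      rw [hrec] at hz
      have := (mul_eq_zero.mp hz).resolve_left (hC _)
      rw [show j + (N:ℤ) * (k + 1) = j + (N:ℤ) * k + N by ring]
      exact this
    | pred k ih =>
      intro j hj0 hjN
      have hrec := coef_rec τ N c1 cτ a ha hd h1 h2 (j + N * (-(k:ℤ) - 1))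
      rw [hrec, show j + (N:ℤ) * (-(k:ℤ) - 1) + N = j + (N:ℤ) * (-(k:ℤ)) by ring,
        ih j hj0 hjN, mul_zero]
  have hNz : (N : ℤ) ≠ 0 := by exact_mod_cast hN.ne'
  have := key (n / N) (n % N) (Int.emod_nonneg n hNz)
    (by exact_mod_cast Int.emod_lt_of_pos n (by exact_mod_cast hN))
  rwa [Int.emod_add_mul_ediv n N] at this

end

noncomputable section

open Filter Topology

lemma eq_zero_of_coef_zero (c1 a : ℂ) (ha : Complex.exp a = c1)
    {φ : ℂ → ℂ} (hd : Differentiable ℂ φ)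
    (h1 : ∀ y, φ (y + 1) = c1 * φ y)
    (hall : ∀ n : ℤ, coefA a φ n = 0) : φ = 0 := by
  haveI : Fact (0 < (1:ℝ)) := ⟨one_pos⟩
  set ψ : ℝ → ℂ := fun t => Complex.exp (-(a * t)) * φ t with hψdef
  have hψcont : Continuous ψ := by
    apply Continuous.mul _ (hd.continuous.comp Complex.continuous_ofReal)
    apply Continuous.cexp
    fun_prop
  have hper : Function.Periodic ψ 1 := by
    intro t
    show Complex.exp (-(a * ((t+1:ℝ):ℂ))) * φ ((t+1:ℝ):ℂ) = _
    rw [show ((t+1:ℝ):ℂ) = (t:ℂ) + 1 by push_cast; ring, h1, ← ha]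
    have e : Complex.exp (-(a * ((t:ℂ)+1))) * Complex.exp a
        = Complex.exp (-(a * (t:ℂ))) := exp_helper (by ring)
    linear_combination φ (t:ℂ) * e
  have hliftcont : Continuous (hper.lift) := Continuous.quotient_liftOn' hψcont _
  set F : C(AddCircle (1:ℝ), ℂ) := ⟨hper.lift, hliftcont⟩ with hFdef
  have hFcoe : ∀ t : ℝ, F (t : AddCircle (1:ℝ)) = ψ t := fun t => hper.lift_coe t
  have hcoef : ∀ n : ℤ, fourierCoeff (F : AddCircle (1:ℝ) → ℂ) n = coefA a φ n := by
    intro n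
    rw [fourierCoeff_eq_intervalIntegral (F : AddCircle (1:ℝ) → ℂ) n 0]
    rw [zero_add, one_div_one, one_smul]
    unfold coefA
    apply intervalIntegral.integral_congr
    intro x _
    show (fourier (-n) (x : AddCircle (1:ℝ))) • F (x : AddCircle (1:ℝ)) = _
    rw [hFcoe x, fourier_coe_apply, smul_eq_mul]
    have e : Complex.exp (2 * Real.pi * I * (-n : ℤ) * (x:ℝ) / (1:ℝ)) *
        Complex.exp (-(a * (x:ℂ)))
        = Complex.exp (-(2 * Real.pi * I * n * (x:ℂ)) - a * (x:ℂ)) :=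
      exp_helper (by push_cast; ring)
    linear_combination φ (x:ℂ) * e
  have hzero : (fourierCoeff (F : AddCircle (1:ℝ) → ℂ)) = (fun _ : ℤ => (0:ℂ)) :=
    funext fun n => by rw [hcoef, hall]
  have hsum : Summable (fourierCoeff (F : AddCircle (1:ℝ) → ℂ)) := by
    rw [hzero]; exact summable_zero
  have hF0 : ∀ x : AddCircle (1:ℝ), F x = 0 := by
    intro x
    have h1' := has_pointwise_sum_fourier_series_of_summable hsum x
    have h2' : HasSum (fun i : ℤ => fourierCoeff (F : AddCircle (1:ℝ) → ℂ) i • fourier i x)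
        (0:ℂ) := by
      rw [hzero]
      simpa using hasSum_zero
    exact (h1'.unique h2')
  have hφreal : ∀ t : ℝ, φ (t:ℂ) = 0 := by
    intro t
    have := hF0 (t : AddCircle (1:ℝ))
    rw [hFcoe t] at this
    have := mul_eq_zero.mp this
    rcases this with h | h
    · exact absurd h (Complex.exp_ne_zero _)
    · exact h
  have hana : AnalyticOnNhd ℂ φ Set.univ := analyticOnNhd_univ_iff_differentiable.mpr hd
  have hfreq : ∃ᶠ z in 𝓝[≠] (0:ℂ), φ z = 0 := by
    have htend1 : Tendsto (fun n : ℕ => ((1 / (n+1) : ℝ) : ℂ)) atTop (𝓝 (0:ℂ)) := by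
      have := tendsto_one_div_add_atTop_nhds_zero_nat (𝕜 := ℝ)
      have h2 := (Complex.continuous_ofReal.tendsto (0:ℝ)).comp this
      simpa [Function.comp_def] using h2
    have htend : Tendsto (fun n : ℕ => ((1 / (n+1) : ℝ) : ℂ)) atTop (𝓝[≠] (0:ℂ)) := by
      rw [tendsto_nhdsWithin_iff]
      refine ⟨htend1, Eventually.of_forall fun n => ?_⟩
      simp only [Set.mem_compl_iff, Set.mem_singleton_iff]
      have : (0:ℝ) < 1 / (n+1) := by positivity
      exact_mod_cast Complex.ofReal_ne_zero.mpr this.ne'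
    exact htend.frequently (Frequently.of_forall fun n => hφreal _)
  funext z
  exact hana.eqOn_zero_of_preconnected_of_frequently_eq_zero isPreconnected_univ
    (Set.mem_univ 0) hfreq (Set.mem_univ z)

end

noncomputable section

lemma jacobiTheta₂_add_nat (k : ℕ) (z t : ℂ) :
    jacobiTheta₂ (z + k) t = jacobiTheta₂ z t := by
  induction k with
  | zero => simp
  | succ m ih =>
    rw [show z + ((m+1 : ℕ):ℂ) = (z + m) + 1 by push_cast; ring, jacobiTheta₂_add_left, ih]

/-- The basis theta functions. -/
def thetaF (τ : ℂ) (N : ℕ) (a z0 : ℂ) (j : ℕ) : ℂ → ℂ := fun y =>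
  Complex.exp (a * y + 2 * Real.pi * I * j * y) *
    jacobiTheta₂ ((N:ℂ) * y + ((j:ℂ) * τ + z0)) ((N:ℂ) * τ)

section thetaF

variable {τ : ℂ} {N : ℕ} (a z0 : ℂ) (j : ℕ)

lemma him_Nτ (hτ : 0 < τ.im) (hN : 0 < N) : 0 < ((N:ℂ) * τ).im := by
  have : ((N:ℂ) * τ).im = N * τ.im := by simp [Complex.mul_im]
  rw [this]; positivity

lemma thetaF_differentiable (hτ : 0 < τ.im) (hN : 0 < N) :
    Differentiable ℂ (thetaF τ N a z0 j) := by
  apply Differentiable.mul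
  · apply Differentiable.cexp; fun_prop
  · intro y
    have h1 : DifferentiableAt ℂ (fun z => jacobiTheta₂ z ((N:ℂ) * τ))
        ((N:ℂ) * y + ((j:ℂ) * τ + z0)) := differentiableAt_jacobiTheta₂_fst _ (him_Nτ hτ hN)
    exact h1.comp (f := fun y => (N:ℂ) * y + ((j:ℂ) * τ + z0)) y (by fun_prop)

lemma thetaF_periodic (c1 : ℂ) (ha : Complex.exp a = c1) (y : ℂ) :
    thetaF τ N a z0 j (y + 1) = c1 * thetaF τ N a z0 j y := by
  unfold thetaF
  rw [show (N:ℂ) * (y + 1) + ((j:ℂ) * τ + z0) = ((N:ℂ) * y + ((j:ℂ) * τ + z0)) + (N:ℕ) by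
    ring, jacobiTheta₂_add_nat, ← ha]
  have e : Complex.exp (a * y + 2 * Real.pi * I * j * y) * Complex.exp a
      = Complex.exp (a * (y + 1) + 2 * Real.pi * I * j * (y + 1)) := by
    rw [← Complex.exp_add, show (a * y + 2 * (Real.pi:ℂ) * I * j * y) + a
        = (a * (y + 1) + 2 * Real.pi * I * j * (y + 1)) + ((-(j:ℤ) : ℤ) : ℂ) * (2 * Real.pi * I) by
        push_cast; ring,
      Complex.exp_add, Complex.exp_int_mul_two_pi_mul_I, mul_one]
  linear_combination -jacobiTheta₂ ((N:ℂ) * y + ((j:ℂ) * τ + z0)) ((N:ℂ) * τ) * e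

lemma thetaF_quasiperiodic (cτ : ℂ)
    (hz0 : Complex.exp (a * τ - 2 * Real.pi * I * z0) = cτ) (y : ℂ) :
    thetaF τ N a z0 j (y + τ) = cτ *
      Complex.exp (-2 * Real.pi * I * (N : ℂ) * y - Real.pi * I * (N : ℂ) * τ) *
      thetaF τ N a z0 j y := by
  unfold thetaF
  have harg : (N:ℂ) * (y + τ) + ((j:ℂ) * τ + z0)
      = ((N:ℂ) * y + ((j:ℂ) * τ + z0)) + (N:ℂ) * τ := by ring
  rw [harg, jacobiTheta₂_add_left', ← hz0]

  set w : ℂ := (N:ℂ) * y + ((j:ℂ) * τ + z0) with hw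
  set Θ : ℂ := jacobiTheta₂ w ((N:ℂ) * τ) with hΘ
  have e1 : Complex.exp (a * (y + τ) + 2 * Real.pi * I * j * (y + τ)) *
      Complex.exp (-Real.pi * I * ((N:ℂ) * τ + 2 * w))
      = Complex.exp ((a * τ - 2 * Real.pi * I * z0) +
          ((-2 * Real.pi * I * (N:ℂ) * y - Real.pi * I * (N:ℂ) * τ) +
            (a * y + 2 * Real.pi * I * j * y))) :=
    exp_helper (by rw [hw]; ring)
  have e2 : Complex.exp (a * τ - 2 * Real.pi * I * z0) *
      (Complex.exp (-2 * Real.pi * I * (N:ℂ) * y - Real.pi * I * (N:ℂ) * τ) *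
        Complex.exp (a * y + 2 * Real.pi * I * j * y))
      = Complex.exp ((a * τ - 2 * Real.pi * I * z0) +
          ((-2 * Real.pi * I * (N:ℂ) * y - Real.pi * I * (N:ℂ) * τ) +
            (a * y + 2 * Real.pi * I * j * y))) := by
    rw [← Complex.exp_add, ← Complex.exp_add]
  linear_combination Θ * e1 - Θ * e2

end thetaF

end

noncomputable section

open MeasureTheory

lemma coef_thetaF {τ : ℂ} (hτ : 0 < τ.im) {N : ℕ} (hN : 0 < N) (a z0 : ℂ)
    {j n : ℕ} (hj : j < N) (hn : n < N) :
    coefA a (thetaF τ N a z0 j) (n : ℤ) = if n = j then 1 else 0 := by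
  set w : ℂ := (j:ℂ) * τ + z0 with hw
  set μ : Measure ℝ := volume.restrict (Set.Ioc (0:ℝ) 1) with hμ
  set f : ℤ → ℝ → ℂ := fun m t =>
    Complex.exp (2 * Real.pi * I * (((j:ℤ) - n : ℤ) : ℂ) * t) *
      jacobiTheta₂_term m ((N:ℂ) * t + w) ((N:ℂ) * τ) with hf
  -- Step 1: rewrite the integrand as a tsum
  have step1 : coefA a (thetaF τ N a z0 j) (n : ℤ)
      = ∫ t in (0:ℝ)..1, ∑' m : ℤ, f m t := by
    unfold coefA thetaF
    apply intervalIntegral.integral_congr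
    intro t _
    simp only
    have hθ : jacobiTheta₂ ((N:ℂ) * t + w) ((N:ℂ) * τ) = ∑' m : ℤ,
        jacobiTheta₂_term m ((N:ℂ) * t + w) ((N:ℂ) * τ) := rfl
    have e : Complex.exp (-(2 * Real.pi * I * ((n:ℤ):ℂ) * (t:ℂ)) - a * (t:ℂ)) *
        Complex.exp (a * (t:ℂ) + 2 * Real.pi * I * (j:ℂ) * (t:ℂ))
        = Complex.exp (2 * Real.pi * I * (((j:ℤ) - n : ℤ) : ℂ) * (t:ℂ)) :=
      exp_helper (by push_cast; ring)
    calc Complex.exp (-(2 * Real.pi * I * ((n:ℤ):ℂ) * (t:ℂ)) - a * (t:ℂ)) *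
          (Complex.exp (a * (t:ℂ) + 2 * Real.pi * I * (j:ℂ) * (t:ℂ)) *
            jacobiTheta₂ ((N:ℂ) * t + w) ((N:ℂ) * τ))
        = Complex.exp (2 * Real.pi * I * (((j:ℤ) - n : ℤ) : ℂ) * (t:ℂ)) *
            jacobiTheta₂ ((N:ℂ) * t + w) ((N:ℂ) * τ) := by
            linear_combination jacobiTheta₂ ((N:ℂ) * t + w) ((N:ℂ) * τ) * e
      _ = (∑' m : ℤ, f m t) := by rw [hθ, ← tsum_mul_left]
  -- bounds
  set T' : ℝ := N * τ.im with hT'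
  have hT'pos : 0 < T' := by rw [hT']; positivity
  set S : ℝ := |w.im| with hS
  set B : ℤ → ℝ := fun m => Real.exp (-(Real.pi * (T' * (m:ℝ) ^ 2 - 2 * S * |(m:ℝ)|))) with hB
  have hnorm : ∀ (m : ℤ) (t : ℝ), ‖f m t‖ ≤ B m := by
    intro m t
    rw [hf]
    simp only
    rw [norm_mul]
    have h1 : ‖Complex.exp (2 * Real.pi * I * (((j:ℤ) - n : ℤ) : ℂ) * (t:ℂ))‖ = 1 := by
      rw [show (2 * (Real.pi:ℂ) * I * (((j:ℤ) - n : ℤ) : ℂ) * (t:ℂ))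
          = ((2 * Real.pi * ((j:ℤ) - (n:ℤ) : ℤ) * t : ℝ) : ℂ) * I by push_cast; ring]
      rw [Complex.norm_exp_ofReal_mul_I]
    rw [h1, one_mul]
    have him : ((N:ℂ) * (t:ℂ) + w).im = w.im := by
      simp [Complex.add_im, Complex.mul_im]
    have himτ : ((N:ℂ) * τ).im = T' := by simp [Complex.mul_im, hT']
    refine le_trans (norm_jacobiTheta₂_term_le hT'pos (le_of_eq (by rw [him]))
      (le_of_eq himτ.symm) m) (le_of_eq ?_)
    rw [hB]
    congr 1
    push_cast
    ring
  have hcont : ∀ m : ℤ, Continuous (f m) := by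
    intro m
    rw [hf]
    simp only [jacobiTheta₂_term]
    fun_prop
  have hsummB : Summable B := by
    have := summable_pow_mul_jacobiTheta₂_term_bound S hT'pos 0
    rw [hB]
    simpa [pow_zero, one_mul, neg_mul] using this
  -- Step 2: swap the integral and the sum
  have step2 : (∫ t in (0:ℝ)..1, ∑' m : ℤ, f m t) = ∑' m : ℤ, ∫ t in (0:ℝ)..1, f m t := by
    rw [intervalIntegral.integral_of_le zero_le_one]
    have swap := MeasureTheory.integral_tsum (μ := μ) (f := f)
      (fun m => (hcont m).aestronglyMeasurable)
      ?_
    · rw [swap]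
      apply tsum_congr
      intro m
      rw [intervalIntegral.integral_of_le zero_le_one]
    · have hle : ∀ m : ℤ, (∫⁻ t, ‖f m t‖₊ ∂μ) ≤ ENNReal.ofReal (B m) := by
        intro m
        calc (∫⁻ t, (‖f m t‖₊ : ENNReal) ∂μ) ≤ ∫⁻ _, ENNReal.ofReal (B m) ∂μ := by
              apply lintegral_mono
              intro t
              exact le_of_eq_of_le (ofReal_norm (f m t)).symm (ENNReal.ofReal_le_ofReal (hnorm m t))
          _ = ENNReal.ofReal (B m) * μ Set.univ := lintegral_const _
          _ ≤ ENNReal.ofReal (B m) := by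
              rw [hμ, Measure.restrict_apply_univ, Real.volume_Ioc]
              simp
      have hne : (∑' m : ℤ, ENNReal.ofReal (B m)) ≠ ⊤ := by
        have h2 := ENNReal.tsum_coe_ne_top_iff_summable.mpr hsummB.toNNReal
        simpa [ENNReal.ofReal] using h2
      exact ne_top_of_le_ne_top hne (ENNReal.tsum_le_tsum hle)
  -- Step 3: compute each integral
  have step3 : ∀ m : ℤ, (∫ t in (0:ℝ)..1, f m t)
      = Complex.exp (2 * Real.pi * I * m * w + Real.pi * I * m^2 * ((N:ℂ) * τ)) *
          (if (j:ℤ) - n + m * N = 0 then 1 else 0) := by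
    intro m
    have hptwise : ∀ t : ℝ, f m t
        = Complex.exp (2 * Real.pi * I * m * w + Real.pi * I * m^2 * ((N:ℂ) * τ)) *
            Complex.exp (2 * Real.pi * I * (((j:ℤ) - n + m * N : ℤ) : ℂ) * t) := by
      intro t
      rw [hf]
      simp only [jacobiTheta₂_term]
      have e : Complex.exp (2 * Real.pi * I * (((j:ℤ) - n : ℤ) : ℂ) * (t:ℂ)) *
          Complex.exp (2 * Real.pi * I * (m:ℂ) * ((N:ℂ) * t + w) +
            Real.pi * I * (m:ℂ)^2 * ((N:ℂ) * τ))
          = Complex.exp ((2 * Real.pi * I * (m:ℂ) * w + Real.pi * I * (m:ℂ)^2 * ((N:ℂ) * τ)) +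
              2 * Real.pi * I * (((j:ℤ) - n + m * N : ℤ) : ℂ) * (t:ℂ)) :=
        exp_helper (by push_cast; ring)
      rw [← Complex.exp_add] ; rw [← Complex.exp_add] at e
      rw [e, Complex.exp_add]
    rw [intervalIntegral.integral_congr (fun t _ => hptwise t),
      intervalIntegral.integral_const_mul, integral_exp_two_pi_int]
  -- Step 4: compute the sum
  rw [step1, step2]
  have hsingle : ∀ m : ℤ, m ≠ 0 → (∫ t in (0:ℝ)..1, f m t) = 0 := by
    intro m hm
    rw [step3 m, if_neg, mul_zero]
    intro hcontra
    have hjN : (j:ℤ) < N := by exact_mod_cast hj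
    have hnN : (n:ℤ) < N := by exact_mod_cast hn
    have hj0 : (0:ℤ) ≤ j := Int.natCast_nonneg j
    have hn0 : (0:ℤ) ≤ n := Int.natCast_nonneg n
    have hN0 : (0:ℤ) ≤ (N:ℤ) := Int.natCast_nonneg N
    rcases le_or_gt 1 m with h | h
    · have h5 : (N:ℤ) ≤ m * N := le_mul_of_one_le_left hN0 h
      linarith
    · have hm1 : m ≤ -1 := by omega
      have h5 : m * (N:ℤ) ≤ -1 * N := mul_le_mul_of_nonneg_right hm1 hN0
      linarith
  rw [tsum_eq_single 0 (fun m hm => hsingle m hm), step3 0]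
  have hiff : ((j:ℤ) - n + 0 * N = 0) ↔ (n = j) := by omega
  rw [show ((2:ℂ) * Real.pi * I * ((0:ℤ):ℂ) * w + Real.pi * I * ((0:ℤ):ℂ)^2 * ((N:ℂ) * τ))
      = 0 by push_cast; ring, Complex.exp_zero, one_mul]
  rcases eq_or_ne n j with h | h
  · rw [if_pos (hiff.mpr h), if_pos h]
  · rw [if_neg (fun hc => h (hiff.mp hc)), if_neg h]

end

noncomputable section

lemma coefA_add (a : ℂ) {φ φ' : ℂ → ℂ} (hφ : Continuous φ) (hφ' : Continuous φ') (n : ℤ) :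
    coefA a (φ + φ') n = coefA a φ n + coefA a φ' n := by
  unfold coefA
  rw [← intervalIntegral.integral_add]
  · apply intervalIntegral.integral_congr
    intro t _
    simp only [Pi.add_apply]
    ring
  · apply Continuous.intervalIntegrable
    apply Continuous.mul _ (hφ.comp Complex.continuous_ofReal)
    apply Continuous.cexp; fun_prop
  · apply Continuous.intervalIntegrable
    apply Continuous.mul _ (hφ'.comp Complex.continuous_ofReal)
    apply Continuous.cexp; fun_prop

lemma coefA_smul (a c : ℂ) (φ : ℂ → ℂ) (n : ℤ) :
    coefA a (c • φ) n = c * coefA a φ n := by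
  unfold coefA
  rw [← intervalIntegral.integral_const_mul]
  apply intervalIntegral.integral_congr
  intro t _
  simp only [Pi.smul_apply, smul_eq_mul]
  ring

lemma mem_ThetaSpace_iff {τ : ℂ} {N : ℕ} {c1 cτ : ℂ} {φ : ℂ → ℂ} :
    φ ∈ ThetaSpace τ N c1 cτ ↔ Differentiable ℂ φ ∧ (∀ y : ℂ, φ (y + 1) = c1 * φ y) ∧
    (∀ y : ℂ, φ (y + τ) = cτ *
      Complex.exp (-2 * Real.pi * Complex.I * (N : ℂ) * y - Real.pi * Complex.I * (N : ℂ) * τ) *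
      φ y) := Iff.rfl

theorem theta_finrank (τ : ℂ) (hτ : 0 < τ.im) (N : ℕ) (hN : 0 < N)
    (c1 cτ : ℂ) (hc1 : c1 ≠ 0) (hcτ : cτ ≠ 0) :
    Module.finrank ℂ (ThetaSpace τ N c1 cτ) = N := by
  set A : ℂ := Complex.log c1 with hA
  have ha : Complex.exp A = c1 := Complex.exp_log hc1
  have h2πI : (2 * (Real.pi:ℂ) * I) ≠ 0 := by
    simp [Real.pi_ne_zero, I_ne_zero]
  set z0 : ℂ := (A * τ - Complex.log cτ) / (2 * Real.pi * I) with hz0def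
  have hz0 : Complex.exp (A * τ - 2 * Real.pi * I * z0) = cτ := by
    rw [hz0def, show A * τ - 2 * (Real.pi:ℂ) * I * ((A * τ - Complex.log cτ) /
        (2 * Real.pi * I)) = Complex.log cτ by field_simp; ring]
    exact Complex.exp_log hcτ
  -- the coefficient map
  set C : ThetaSpace τ N c1 cτ →ₗ[ℂ] (Fin N → ℂ) :=
    { toFun := fun φ => fun k => coefA A (φ : ℂ → ℂ) ((k : ℕ) : ℤ)
      map_add' := by
        intro φ φ'
        funext k
        have h1 := (mem_ThetaSpace_iff.mp φ.2).1.continuous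
        have h2 := (mem_ThetaSpace_iff.mp φ'.2).1.continuous
        show coefA A ((φ : ℂ → ℂ) + (φ' : ℂ → ℂ)) _ = _
        rw [coefA_add A h1 h2]
        rfl
      map_smul' := by
        intro c φ
        funext k
        show coefA A (c • (φ : ℂ → ℂ)) _ = _
        rw [coefA_smul]
        rfl } with hC
  have hCapply : ∀ (φ : ThetaSpace τ N c1 cτ) (k : Fin N),
      C φ k = coefA A (φ : ℂ → ℂ) ((k : ℕ) : ℤ) := fun _ _ => rfl
  -- injectivity
  have hinj : Function.Injective C := by
    rw [← LinearMap.ker_eq_bot, LinearMap.ker_eq_bot']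
    intro φ hφ0
    obtain ⟨hd, h1, h2⟩ := mem_ThetaSpace_iff.mp φ.2
    have hall0 : ∀ j : ℤ, 0 ≤ j → j < N → coefA A (φ : ℂ → ℂ) j = 0 := by
      intro j hj0 hjN
      have hjn : j.toNat < N := by omega
      have := congrFun hφ0 ⟨j.toNat, hjn⟩
      rw [hCapply] at this
      simpa [Int.toNat_of_nonneg hj0] using this
    have hall : ∀ n : ℤ, coefA A (φ : ℂ → ℂ) n = 0 :=
      coef_all_zero τ N hN c1 cτ A hcτ ha hd h1 h2 hall0
    have : (φ : ℂ → ℂ) = 0 := eq_zero_of_coef_zero c1 A ha hd h1 hall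
    exact Subtype.ext this
  -- the theta basis elements
  have hmem : ∀ jf : Fin N, thetaF τ N A z0 (jf : ℕ) ∈ ThetaSpace τ N c1 cτ := by
    intro jf
    exact mem_ThetaSpace_iff.mpr ⟨thetaF_differentiable A z0 (jf : ℕ) hτ hN,
      thetaF_periodic A z0 (jf : ℕ) c1 ha, thetaF_quasiperiodic A z0 (jf : ℕ) cτ hz0⟩
  have hbasis : ∀ jf : Fin N, C ⟨thetaF τ N A z0 (jf : ℕ), hmem jf⟩ = Pi.single jf 1 := by
    intro jf
    funext k
    rw [hCapply]
    show coefA A (thetaF τ N A z0 (jf : ℕ)) ((k : ℕ) : ℤ) = _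
    rw [coef_thetaF hτ hN A z0 jf.2 k.2, Pi.single_apply]
    rcases eq_or_ne k jf with h | h
    · rw [if_pos (by rw [h]), if_pos h]
    · rw [if_neg (fun hc => h (Fin.ext hc)), if_neg h]
  -- surjectivity
  have hsurj : Function.Surjective C := by
    intro v
    refine ⟨∑ jf : Fin N, v jf • ⟨thetaF τ N A z0 (jf : ℕ), hmem jf⟩, ?_⟩
    rw [map_sum]
    simp_rw [_root_.map_smul, hbasis]
    funext k
    simp only [Finset.sum_apply, Pi.smul_apply, Pi.single_apply, smul_eq_mul, mul_ite,
      mul_one, mul_zero]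
    simp
  have e := LinearEquiv.ofBijective C ⟨hinj, hsurj⟩
  rw [e.finrank_eq, Module.finrank_fin_fun]

end

/-- for every positive integer `N` and every character `χ : Γ → ℂˣ`,
the space `Θ_N(χ)` is an `N`-dimensional complex vector space. -/
theorem statement3 (τ : ℂ) (hτ : 0 < τ.im) (N : ℕ) (hN : 0 < N)
    (χ : latticeGamma τ → ℂˣ) (hχ : ∀ a b : latticeGamma τ, χ (a + b) = χ a * χ b) :
    Module.finrank ℂ
      (ThetaSpace τ N ((χ ⟨1, one_mem_latticeGamma τ⟩ : ℂˣ) : ℂ)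
        ((χ ⟨τ, tau_mem_latticeGamma τ⟩ : ℂˣ) : ℂ)) = N :=
  theta_finrank τ hτ N hN _ _ (Units.ne_zero _) (Units.ne_zero _)
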